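/- Fix k₀ ∈ ℕ, k ≤ k₀, and A ⊆ ℕ. If X and Y are k-graphs each having at least one vertex not in the range of its labeling, then f_A applied to the underlying graph of the gluing X ⊔ₖ Y equals 0. -/

import Mathlib

/-- Same-side adjacency on the disjoint union of two graphs. -/
def sumAdj {V₁ V₂ : Type*} (G₁ : SimpleGraph V₁) (G₂ : SimpleGraph V₂) :
    V₁ ⊕ V₂ → V₁ ⊕ V₂ → Prop
  | Sum.inl a, Sum.inl b => G₁.Adj a b
  | Sum.inr a, Sum.inr b => G₂.Adj a b
  | _, _ => False

lemma sumAdj_symm {V₁ V₂ : Type*} (G₁ : SimpleGraph V₁) (G₂ : SimpleGraph V₂)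
    {u v : V₁ ⊕ V₂} (h : sumAdj G₁ G₂ u v) : sumAdj G₁ G₂ v u := by
  cases u <;> cases v <;> simp_all [sumAdj] <;> exact h.symm

/-- The generating relation for gluing two `k`-graphs: identify vertices
carrying the same label. -/
def glueRel {k : ℕ} {V₁ V₂ : Type*} (ℓ₁ : Fin k → Option V₁) (ℓ₂ : Fin k → Option V₂)
    (u v : V₁ ⊕ V₂) : Prop :=
  ∃ (i : Fin k) (v₁ : V₁) (v₂ : V₂),
    ℓ₁ i = some v₁ ∧ ℓ₂ i = some v₂ ∧ u = Sum.inl v₁ ∧ v = Sum.inr v₂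

def glueSetoid {k : ℕ} {V₁ V₂ : Type*} (ℓ₁ : Fin k → Option V₁)
    (ℓ₂ : Fin k → Option V₂) : Setoid (V₁ ⊕ V₂) :=
  Relation.EqvGen.setoid (glueRel ℓ₁ ℓ₂)

/-- The vertex type of the gluing of two `k`-graphs. -/
def GlueVert {k : ℕ} {V₁ V₂ : Type*} (ℓ₁ : Fin k → Option V₁)
    (ℓ₂ : Fin k → Option V₂) : Type _ :=
  Quotient (glueSetoid ℓ₁ ℓ₂)

def glueMk {k : ℕ} {V₁ V₂ : Type*} (ℓ₁ : Fin k → Option V₁)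
    (ℓ₂ : Fin k → Option V₂) (u : V₁ ⊕ V₂) : GlueVert ℓ₁ ℓ₂ :=
  Quotient.mk (glueSetoid ℓ₁ ℓ₂) u

/-- The underlying graph of the gluing of two `k`-graphs. -/
def glueGraph {k : ℕ} {V₁ V₂ : Type*} (G₁ : SimpleGraph V₁) (ℓ₁ : Fin k → Option V₁)
    (G₂ : SimpleGraph V₂) (ℓ₂ : Fin k → Option V₂) :
    SimpleGraph (GlueVert ℓ₁ ℓ₂) where
  Adj x y := x ≠ y ∧ ∃ u v : V₁ ⊕ V₂,
    glueMk ℓ₁ ℓ₂ u = x ∧ glueMk ℓ₁ ℓ₂ v = y ∧ sumAdj G₁ G₂ u v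
  symm := ⟨fun x y ⟨hne, u, v, hu, hv, h⟩ => ⟨hne.symm, v, u, hv, hu, sumAdj_symm G₁ G₂ h⟩⟩
  loopless := ⟨fun x h => h.1 rfl⟩

/-- The labeling of the gluing of two `k`-graphs. -/
def glueLabel {k : ℕ} {V₁ V₂ : Type*} (ℓ₁ : Fin k → Option V₁)
    (ℓ₂ : Fin k → Option V₂) (i : Fin k) : Option (GlueVert ℓ₁ ℓ₂) :=
  match ℓ₁ i with
  | some v => some (glueMk ℓ₁ ℓ₂ (Sum.inl v))
  | none => (ℓ₂ i).map fun v => glueMk ℓ₁ ℓ₂ (Sum.inr v)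

noncomputable instance {k : ℕ} {V₁ V₂ : Type*} [Fintype V₁] [Fintype V₂]
    (ℓ₁ : Fin k → Option V₁) (ℓ₂ : Fin k → Option V₂) : Fintype (GlueVert ℓ₁ ℓ₂) := by
  classical exact Quotient.fintype (glueSetoid ℓ₁ ℓ₂)

/-- A graph is `m`-connected if it has more than `m` vertices and removing any
fewer than `m` vertices leaves it connected. -/
def IsMConnected {V : Type*} [Fintype V] (m : ℕ) (G : SimpleGraph V) : Prop :=
  m < Fintype.card V ∧ ∀ S : Set V, S.ncard < m → (G.induce Sᶜ).Connected

open Classical in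
/-- The graph parameter `f_A`: the number of vertices if the graph is
`(k₀+1)`-connected with number of vertices in `A`, and `0` otherwise. -/
noncomputable def fA (k₀ : ℕ) (A : Set ℕ) {V : Type*} [Fintype V] (G : SimpleGraph V) : ℝ :=
  if IsMConnected (k₀ + 1) G ∧ Fintype.card V ∈ A then (Fintype.card V : ℝ) else 0


section Aux

variable {k : ℕ} {V₁ V₂ : Type*} {ℓ₁ : Fin k → Option V₁} {ℓ₂ : Fin k → Option V₂}

/-- An unlabeled left vertex forms a singleton class. -/
lemma eqvGen_inl_fixed {a : V₁} (ha : ∀ i, ℓ₁ i ≠ some a)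
    {u v : V₁ ⊕ V₂} (h : Relation.EqvGen (glueRel ℓ₁ ℓ₂) u v) :
    (u = Sum.inl a → v = Sum.inl a) ∧ (v = Sum.inl a → u = Sum.inl a) := by
  induction h with
  | rel x y hxy =>
    obtain ⟨i, v₁, v₂, h1, h2, rfl, rfl⟩ := hxy
    constructor
    · rintro h; cases h; exact absurd h1 (ha i)
    · rintro ⟨⟩
  | refl => exact ⟨id, id⟩
  | symm x y _ ih => exact ⟨ih.2, ih.1⟩
  | trans x y z _ _ ih1 ih2 => exact ⟨fun h => ih2.1 (ih1.1 h), fun h => ih1.2 (ih2.2 h)⟩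

/-- An unlabeled right vertex forms a singleton class. -/
lemma eqvGen_inr_fixed {b : V₂} (hb : ∀ i, ℓ₂ i ≠ some b)
    {u v : V₁ ⊕ V₂} (h : Relation.EqvGen (glueRel ℓ₁ ℓ₂) u v) :
    (u = Sum.inr b → v = Sum.inr b) ∧ (v = Sum.inr b → u = Sum.inr b) := by
  induction h with
  | rel x y hxy =>
    obtain ⟨i, v₁, v₂, h1, h2, rfl, rfl⟩ := hxy
    constructor
    · rintro ⟨⟩
    · rintro h; cases h; exact absurd h2 (hb i)
  | refl => exact ⟨id, id⟩
  | symm x y _ ih => exact ⟨ih.2, ih.1⟩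
  | trans x y z _ _ ih1 ih2 => exact ⟨fun h => ih2.1 (ih1.1 h), fun h => ih1.2 (ih2.2 h)⟩

/-- Any pair of distinct related elements are both chained to a labeled left vertex. -/
lemma eqvGen_cases {u v : V₁ ⊕ V₂}
    (h : Relation.EqvGen (glueRel ℓ₁ ℓ₂) u v) :
    u = v ∨ ((∃ i w, ℓ₁ i = some w ∧ Relation.EqvGen (glueRel ℓ₁ ℓ₂) u (Sum.inl w)) ∧
             (∃ i w, ℓ₁ i = some w ∧ Relation.EqvGen (glueRel ℓ₁ ℓ₂) v (Sum.inl w))) := by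
  induction h with
  | rel x y hxy =>
    obtain ⟨i, v₁, v₂, h1, h2, rfl, rfl⟩ := hxy
    exact Or.inr ⟨⟨i, v₁, h1, Relation.EqvGen.refl _⟩,
      ⟨i, v₁, h1, Relation.EqvGen.symm _ _
        (Relation.EqvGen.rel _ _ ⟨i, v₁, v₂, h1, h2, rfl, rfl⟩)⟩⟩
  | refl => exact Or.inl rfl
  | symm x y _ ih =>
    rcases ih with h | ⟨h1, h2⟩
    · exact Or.inl h.symm
    · exact Or.inr ⟨h2, h1⟩
  | trans x y z _ _ ih1 ih2 =>
    rcases ih1 with rfl | ⟨h1, h2⟩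
    · exact ih2
    · rcases ih2 with rfl | ⟨h3, h4⟩
      · exact Or.inr ⟨h1, h2⟩
      · exact Or.inr ⟨h1, h4⟩

lemma glueMk_eq_iff {u v : V₁ ⊕ V₂} :
    glueMk ℓ₁ ℓ₂ u = glueMk ℓ₁ ℓ₂ v ↔ Relation.EqvGen (glueRel ℓ₁ ℓ₂) u v :=
  Quotient.eq''

end Aux
/-- If `k ≤ k₀` and both `k`-graphs have an unlabeled vertex, then `f_A`
vanishes on (the underlying graph of) their gluing. -/
theorem fA_glue_eq_zero (k₀ k : ℕ) (hk : k ≤ k₀) (A : Set ℕ)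
    {V₁ V₂ : Type} [Fintype V₁] [Fintype V₂]
    (G₁ : SimpleGraph V₁) (ℓ₁ : Fin k → Option V₁)
    (G₂ : SimpleGraph V₂) (ℓ₂ : Fin k → Option V₂)
    (h₁ : ∃ v : V₁, ∀ i : Fin k, ℓ₁ i ≠ some v)
    (h₂ : ∃ v : V₂, ∀ i : Fin k, ℓ₂ i ≠ some v) :
    fA k₀ A (glueGraph G₁ ℓ₁ G₂ ℓ₂) = 0 := by
  classical
  obtain ⟨a, ha⟩ := h₁
  obtain ⟨b, hb⟩ := h₂
  set S : Set (GlueVert ℓ₁ ℓ₂) :=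
    {x | ∃ i w, ℓ₁ i = some w ∧ x = glueMk ℓ₁ ℓ₂ (Sum.inl w)} with hS
  -- cardinality bound
  have hScard : S.ncard ≤ k := by
    set g : Fin k → GlueVert ℓ₁ ℓ₂ := fun i =>
      (ℓ₁ i).elim (glueMk ℓ₁ ℓ₂ (Sum.inl a)) (fun w => glueMk ℓ₁ ℓ₂ (Sum.inl w)) with hg
    have hsub : S ⊆ Set.range g := by
      rintro x ⟨i, w, hi, rfl⟩
      exact ⟨i, by simp [hg, hi]⟩
    calc S.ncard ≤ (Set.range g).ncard :=
          Set.ncard_le_ncard hsub (Set.finite_range g)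
      _ ≤ (Set.univ : Set (Fin k)).ncard := by
          rw [← Set.image_univ]; exact Set.ncard_image_le Set.finite_univ
      _ = k := by simp [Set.ncard_univ]
  -- the unlabeled classes avoid S
  have hamem : glueMk ℓ₁ ℓ₂ (Sum.inl a) ∈ Sᶜ := by
    rintro ⟨i, w, hi, hw⟩
    have := (eqvGen_inl_fixed ha (glueMk_eq_iff.mp hw)).1 rfl
    cases this
    exact ha i hi
  have hbmem : glueMk ℓ₁ ℓ₂ (Sum.inr b) ∈ Sᶜ := by
    rintro ⟨i, w, hi, hw⟩
    exact absurd ((eqvGen_inr_fixed hb (glueMk_eq_iff.mp hw)).1 rfl) (by simp)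
  -- mixed classes lie in S
  have hmixed : ∀ (x : V₁) (y : V₂),
      glueMk ℓ₁ ℓ₂ (Sum.inl x) = glueMk ℓ₁ ℓ₂ (Sum.inr y) →
      glueMk ℓ₁ ℓ₂ (Sum.inl x) ∈ S := by
    intro x y hxy
    rcases eqvGen_cases (glueMk_eq_iff.mp hxy) with h | ⟨⟨i, w, hi, hw⟩, -⟩
    · exact absurd h (by simp)
    · exact ⟨i, w, hi, (glueMk_eq_iff.mpr hw)⟩
  have hnot : ¬ IsMConnected (k₀ + 1) (glueGraph G₁ ℓ₁ G₂ ℓ₂) := by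
    rintro ⟨-, hconn⟩
    have hc := hconn S (by omega)
    -- invariant: having a left representative is preserved along edges in the induced graph
    set Q : ↥Sᶜ → Prop := fun x => ∃ w : V₁, glueMk ℓ₁ ℓ₂ (Sum.inl w) = x.1 with hQ
    have step : ∀ x y : ↥Sᶜ,
        ((glueGraph G₁ ℓ₁ G₂ ℓ₂).induce Sᶜ).Adj x y → Q x → Q y := by
      rintro x y hadj ⟨w, hw⟩
      have hadj' : (glueGraph G₁ ℓ₁ G₂ ℓ₂).Adj x.1 y.1 := hadj
      obtain ⟨-, u, v, hu, hv, huv⟩ := hadj'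
      match u, v, huv with
      | Sum.inl u, Sum.inl v, huv => exact ⟨v, hv⟩
      | Sum.inr u, Sum.inr v, huv =>
        exact absurd (hw ▸ hmixed w u (hw.symm ▸ hu.symm)) x.2
    have walkQ : ∀ {x y : ↥Sᶜ},
        ((glueGraph G₁ ℓ₁ G₂ ℓ₂).induce Sᶜ).Walk x y → Q x → Q y := by
      intro x y p
      induction p with
      | nil => exact id
      | cons h p ih => exact fun hx => ih (step _ _ h hx)
    obtain ⟨p⟩ := hc.preconnected ⟨_, hamem⟩ ⟨_, hbmem⟩
    have hQb : Q ⟨_, hbmem⟩ := walkQ p ⟨a, rfl⟩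
    obtain ⟨w, hw⟩ := hQb
    have hw' : glueMk ℓ₁ ℓ₂ (Sum.inl w) = glueMk ℓ₁ ℓ₂ (Sum.inr b) := hw
    exact hbmem (hw' ▸ hmixed w b hw')
  simp only [fA]
  rw [if_neg]
  rintro ⟨h, -⟩
  exact hnot h
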